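/- (Lexicographical theorem) Let 𝓐 and 𝓑 be families of subsets of a common finite ground set O, linearly ordered by ≻, such that 𝓐 is dual to 𝓑, and let A⁰ ∈ 𝓐 be a lexmax edge, i.e., A⁰ ⪰_L A for every A ∈ 𝓐. Then for every o⁰ ∈ A⁰ there exists an edge B⁰ ∈ 𝓑 such that A⁰ ∩ B⁰ = {o⁰} and o⁰ ⪰ o for each o ∈ B⁰. -/

import Mathlib

/-- `LexGt X Y` means `X ≻_L Y`: the subsets are distinct and the smallest element of the
symmetric difference `(X \ Y) ∪ (Y \ X)` belongs to `Y`. -/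
def LexGt {α : Type*} [LinearOrder α] (X Y : Finset α) : Prop :=
  ∃ o ∈ Y, o ∉ X ∧ ∀ o' ∈ (X \ Y) ∪ (Y \ X), o ≤ o'

/-- `𝓐` is dual to `𝓑`: (i) every edge of `𝓐` meets every edge of `𝓑`, and
(iv) every subset of the ground set meeting all edges of `𝓑` contains an edge of `𝓐`. -/
def Dual {α : Type*} [DecidableEq α] (𝓐 𝓑 : Set (Finset α)) : Prop :=
  (∀ A ∈ 𝓐, ∀ B ∈ 𝓑, (A ∩ B).Nonempty) ∧
    (∀ T : Finset α, (∀ B ∈ 𝓑, (T ∩ B).Nonempty) → ∃ A ∈ 𝓐, A ⊆ T)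

/-- Lexicographical theorem: if `A⁰` is a lexmax edge of `𝓐` then for every `o⁰ ∈ A⁰`
there is an edge `B⁰ ∈ 𝓑` with `A⁰ ∩ B⁰ = {o⁰}` and `o⁰ ⪰ o` for each `o ∈ B⁰`. -/
theorem lexicographical_theorem {α : Type*} [Fintype α] [LinearOrder α]
    (𝓐 𝓑 : Set (Finset α)) (h : Dual 𝓐 𝓑)
    (A0 : Finset α) (hA0 : A0 ∈ 𝓐) (hlex : ∀ A ∈ 𝓐, LexGt A0 A ∨ A0 = A) :
    ∀ o0 ∈ A0, ∃ B0 ∈ 𝓑, A0 ∩ B0 = {o0} ∧ ∀ o ∈ B0, o ≤ o0 := by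
  intro o0 ho0
  classical
  set S : Finset α := A0.erase o0 ∪ Finset.univ.filter (fun o => o0 < o) with hS
  have hSmem : ∀ x, x ∈ S ↔ (x ∈ A0 ∧ x ≠ o0) ∨ o0 < x := by
    intro x
    simp [hS, Finset.mem_erase, and_comm]
  -- S cannot meet every B
  have hnot : ¬ ∀ B ∈ 𝓑, (S ∩ B).Nonempty := by
    intro hall
    obtain ⟨A, hA, hAS⟩ := h.2 S hall
    have ho0A : o0 ∉ A := by
      intro hc
      have := (hSmem o0).1 (hAS hc)
      simp at this
    rcases hlex A hA with hgt | heq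
    · obtain ⟨m, hmA, hmA0, hmin⟩ := hgt
      have hm1 : m ≤ o0 := hmin o0 (by simp [Finset.mem_union, Finset.mem_sdiff, ho0, ho0A])
      have : o0 < m := by
        rcases (hSmem m).1 (hAS hmA) with ⟨h1, _⟩ | h2
        · exact absurd h1 hmA0
        · exact h2
      exact absurd hm1 (not_le.2 this)
    · exact ho0A (heq ▸ ho0)
  push_neg at hnot
  obtain ⟨B0, hB0, hSB0⟩ := hnot
  have hdisj : ∀ x ∈ B0, x ∉ S := by
    intro x hx hxS
    exact (Finset.not_nonempty_iff_eq_empty.mpr hSB0) ⟨x, Finset.mem_inter.2 ⟨hxS, hx⟩⟩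
  refine ⟨B0, hB0, ?_, ?_⟩
  · apply Finset.Subset.antisymm
    · intro x hx
      rw [Finset.mem_inter] at hx
      have := hdisj x hx.2
      rw [hSmem] at this
      push_neg at this
      simp [this.1 hx.1]
    · intro x hx
      rw [Finset.mem_singleton] at hx
      rw [hx]
      obtain ⟨y, hy⟩ := h.1 A0 hA0 B0 hB0
      rw [Finset.mem_inter] at hy
      have := hdisj y hy.2
      rw [hSmem] at this
      push_neg at this
      have : y = o0 := this.1 hy.1
      exact Finset.mem_inter.2 ⟨ho0, this ▸ hy.2⟩
  · intro o ho
    have := hdisj o ho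
    rw [hSmem] at this
    push_neg at this
    exact this.2
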